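/- arXiv:2603.22364 — 2 statements merged into one kernel-verified Lean document; each statement's English description precedes it below -/
import Mathlib

section
/- Let μ be a σ-finite measure on a measurable space X, let p_c, p_u, and p_ref be strictly positive probability densities with respect to μ, let β > 0, and let σ(w) = 1/(1+e^{−w}) denote the sigmoid function. Suppose Z̃ = ∫ p_ref(x) (p_c(x)/p_u(x))^{1/β} dμ(x) is finite, and define p*(x) = p_ref(x) (p_c(x)/p_u(x))^{1/β} / Z̃. Then for every strictly positive probability density q with respect to μ, ∫∫ log σ(β log(q(x)/p_ref(x)) − β log(q(y)/p_ref(y))) p_c(x) p_u(y) dμ(x) dμ(y) ≤ ∫∫ log σ(β log(p*(x)/p_ref(x)) − β log(p*(y)/p_ref(y))) p_c(x) p_u(y) dμ(x) dμ(y), where both double integrals take values in [−∞, 0]. -/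
open MeasureTheory Real ENNReal

/-- The sigmoid function `σ(w) = 1/(1 + e^{-w})`. -/
noncomputable def sigmoid (w : ℝ) : ℝ := 1 / (1 + Real.exp (-w))



lemma sigmoid_pos (w : ℝ) : 0 < _root_.sigmoid w := by
  unfold _root_.sigmoid; positivity

lemma sigmoid_lt_one (w : ℝ) : _root_.sigmoid w < 1 := by
  unfold _root_.sigmoid
  rw [div_lt_one (by positivity)]
  linarith [Real.exp_pos (-w)]

lemma sigmoid_neg (w : ℝ) : _root_.sigmoid (-w) = 1 - _root_.sigmoid w := by
  unfold _root_.sigmoid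
  have h1 : (0:ℝ) < 1 + Real.exp (-w) := by positivity
  have h2 : (0:ℝ) < 1 + Real.exp (-(-w)) := by positivity
  have hE : Real.exp w * Real.exp (-w) = 1 := by
    rw [← Real.exp_add]; simp
  simp only [neg_neg] at *
  field_simp
  nlinarith [hE]

lemma sigmoid_log_div {a b : ℝ} (ha : 0 < a) (hb : 0 < b) :
    _root_.sigmoid (Real.log (a / b)) = a / (a + b) := by
  unfold _root_.sigmoid
  rw [← Real.log_inv, Real.exp_log (by positivity)]
  rw [inv_div]
  field_simp

lemma neg_log_sigmoid_nonneg (w : ℝ) : 0 ≤ -(Real.log (_root_.sigmoid w)) :=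
  neg_nonneg.2 (Real.log_nonpos (_root_.sigmoid_pos w).le (_root_.sigmoid_lt_one w).le)

lemma gibbs {a b p : ℝ} (ha : 0 < a) (hb : 0 < b) (hp : 0 < p) (hp1 : p < 1) :
    a * Real.log p + b * Real.log (1 - p) ≤
      a * Real.log (a / (a + b)) + b * Real.log (b / (a + b)) := by
  have hab : (0:ℝ) < a + b := by linarith
  have h1p : (0:ℝ) < 1 - p := by linarith
  have e1 : Real.log (p * (a + b) / a) = Real.log p + Real.log (a + b) - Real.log a := by
    rw [Real.log_div (by positivity) ha.ne', Real.log_mul hp.ne' hab.ne']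
  have e2 : Real.log ((1 - p) * (a + b) / b)
      = Real.log (1 - p) + Real.log (a + b) - Real.log b := by
    rw [Real.log_div (by positivity) hb.ne', Real.log_mul h1p.ne' hab.ne']
  have e3 : Real.log (a / (a + b)) = Real.log a - Real.log (a + b) :=
    Real.log_div ha.ne' hab.ne'
  have e4 : Real.log (b / (a + b)) = Real.log b - Real.log (a + b) :=
    Real.log_div hb.ne' hab.ne'
  have i1 : a * Real.log p + a * Real.log (a + b) - a * Real.log a ≤ p * (a + b) - a := by
    calc a * Real.log p + a * Real.log (a + b) - a * Real.log a
        = a * Real.log (p * (a + b) / a) := by rw [e1]; ring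
      _ ≤ a * (p * (a + b) / a - 1) :=
          mul_le_mul_of_nonneg_left (Real.log_le_sub_one_of_pos (by positivity)) ha.le
      _ = p * (a + b) - a := by field_simp
  have i2 : b * Real.log (1 - p) + b * Real.log (a + b) - b * Real.log b
      ≤ (1 - p) * (a + b) - b := by
    calc b * Real.log (1 - p) + b * Real.log (a + b) - b * Real.log b
        = b * Real.log ((1 - p) * (a + b) / b) := by rw [e2]; ring
      _ ≤ b * ((1 - p) * (a + b) / b - 1) :=
          mul_le_mul_of_nonneg_left (Real.log_le_sub_one_of_pos (by positivity)) hb.le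
      _ = (1 - p) * (a + b) - b := by field_simp
  rw [e3, e4]
  nlinarith [i1, i2]

lemma key_pointwise {a b : ℝ} (ha : 0 < a) (hb : 0 < b) (w : ℝ) :
    a * (-(Real.log (_root_.sigmoid (Real.log (a / b)))))
      + b * (-(Real.log (_root_.sigmoid (-(Real.log (a / b))))))
    ≤ a * (-(Real.log (_root_.sigmoid w))) + b * (-(Real.log (_root_.sigmoid (-w)))) := by
  have hab : (0:ℝ) < a + b := by linarith
  rw [sigmoid_log_div ha hb, _root_.sigmoid_neg, sigmoid_log_div ha hb, _root_.sigmoid_neg]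
  have h1 : 1 - a / (a + b) = b / (a + b) := by field_simp; ring
  rw [h1]
  have := gibbs ha hb (_root_.sigmoid_pos w) (_root_.sigmoid_lt_one w)
  linarith

lemma sigmoid_continuous : Continuous _root_.sigmoid := by
  unfold _root_.sigmoid
  exact continuous_const.div (by continuity) (fun w => by positivity)

/-- **Paper's Theorem 2 (optimal solution of CC-DPO).**  With strictly positive
densities `p_c` (conditional), `p_u` (unconditional) and base model `p_ref`, `β > 0`,
and finite `Z̃ = ∫ p_ref (p_c/p_u)^{1/β} dμ`, the DPO objective with reward
parameterization `r_q(x) = β log (q x / p_ref x)`,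
`∬ log σ(r_q(x) − r_q(y)) p_c(x) p_u(y) dμ dμ` (valued in `[-∞, 0]`), is maximized over
probability densities `q` by the gamma-powered distribution
`p*(x) = p_ref(x) (p_c(x)/p_u(x))^{1/β} / Z̃`.  Since the integrands are nonpositive,
the inequality is stated via Lebesgue integrals of their negations, reversed. -/
theorem ccdpo_optimal_solution {X : Type*} [MeasurableSpace X]
    (μ : Measure X) [SigmaFinite μ]
    (pc pu pref : X → ℝ)
    (hpcm : Measurable pc) (hpum : Measurable pu) (hprefm : Measurable pref)
    (hpcpos : ∀ x, 0 < pc x) (hpupos : ∀ x, 0 < pu x) (hprefpos : ∀ x, 0 < pref x)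
    (hpci : Integrable pc μ) (hpui : Integrable pu μ) (hprefi : Integrable pref μ)
    (hpc1 : ∫ x, pc x ∂μ = 1) (hpu1 : ∫ x, pu x ∂μ = 1) (hpref1 : ∫ x, pref x ∂μ = 1)
    (β : ℝ) (hβ : 0 < β)
    (hZint : Integrable (fun x => pref x * (pc x / pu x) ^ (1 / β)) μ)
    (Zt : ℝ) (hZt : Zt = ∫ x, pref x * (pc x / pu x) ^ (1 / β) ∂μ)
    (pstar : X → ℝ)
    (hpstar : ∀ x, pstar x = pref x * (pc x / pu x) ^ (1 / β) / Zt)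
    (q : X → ℝ) (hqm : Measurable q) (hqpos : ∀ x, 0 < q x)
    (hqi : Integrable q μ) (hq1 : ∫ x, q x ∂μ = 1) :
    ∫⁻ x, ∫⁻ y, ENNReal.ofReal (pc x * pu y *
        (-(Real.log (_root_.sigmoid (β * Real.log (pstar x / pref x)
            - β * Real.log (pstar y / pref y)))))) ∂μ ∂μ ≤
      ∫⁻ x, ∫⁻ y, ENNReal.ofReal (pc x * pu y *
        (-(Real.log (_root_.sigmoid (β * Real.log (q x / pref x)
            - β * Real.log (q y / pref y)))))) ∂μ ∂μ := by
  -- positivity of Zt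
  have hμ : μ ≠ 0 := by
    intro h
    rw [h] at hpc1
    simp at hpc1
  have hZpos : 0 < Zt := by
    rw [hZt]
    have hfpos : ∀ x, 0 < pref x * (pc x / pu x) ^ (1 / β) := fun x =>
      mul_pos (hprefpos x) (Real.rpow_pos_of_pos (div_pos (hpcpos x) (hpupos x)) _)
    refine (integral_pos_iff_support_of_nonneg (fun x => (hfpos x).le) hZint).2 ?_
    have hsupp : Function.support (fun x => pref x * (pc x / pu x) ^ (1 / β)) = Set.univ :=
      Set.eq_univ_of_forall fun x => (hfpos x).ne'
    rw [hsupp]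
    exact Measure.measure_univ_pos.2 hμ
  -- the two reward functions
  set rs : X → ℝ := fun x => β * Real.log (pstar x / pref x) with hrs
  set rq : X → ℝ := fun x => β * Real.log (q x / pref x) with hrq
  have hpstarm : Measurable pstar := by
    have : pstar = fun x => pref x * (pc x / pu x) ^ (1 / β) / Zt := funext hpstar
    rw [this]
    fun_prop
  have hrsm : Measurable rs :=
    measurable_const.mul (Real.measurable_log.comp (hpstarm.div hprefm))
  have hrqm : Measurable rq :=
    measurable_const.mul (Real.measurable_log.comp (hqm.div hprefm))
  -- key identity for rs
  have hrsx : ∀ x, rs x = Real.log (pc x / pu x) - β * Real.log Zt := by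
    intro x
    have hprefne := (hprefpos x).ne'
    have hrppos : 0 < (pc x / pu x) ^ (1 / β) :=
      Real.rpow_pos_of_pos (div_pos (hpcpos x) (hpupos x)) _
    have h1 : pstar x / pref x = (pc x / pu x) ^ (1 / β) / Zt := by
      rw [hpstar x]; field_simp
    rw [hrs]
    simp only
    rw [h1, Real.log_div hrppos.ne' hZpos.ne',
      Real.log_rpow (div_pos (hpcpos x) (hpupos x))]
    field_simp
  have hr : ∀ x y, rs x - rs y = Real.log ((pc x * pu y) / (pc y * pu x)) := by
    intro x y
    rw [hrsx x, hrsx y,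
      Real.log_div (mul_pos (hpcpos x) (hpupos y)).ne' (mul_pos (hpcpos y) (hpupos x)).ne',
      Real.log_mul (hpcpos x).ne' (hpupos y).ne',
      Real.log_mul (hpcpos y).ne' (hpupos x).ne',
      Real.log_div (hpcpos x).ne' (hpupos x).ne',
      Real.log_div (hpcpos y).ne' (hpupos y).ne']
    ring
  -- general symmetrization identity
  have hdouble : ∀ r : X → ℝ, Measurable r →
      (∫⁻ x, ∫⁻ y, ENNReal.ofReal (pc x * pu y * (-(Real.log (_root_.sigmoid (r x - r y))))) ∂μ ∂μ)
        + (∫⁻ x, ∫⁻ y, ENNReal.ofReal (pc x * pu y * (-(Real.log (_root_.sigmoid (r x - r y))))) ∂μ ∂μ)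
      = ∫⁻ x, ∫⁻ y,
          (ENNReal.ofReal (pc x * pu y * (-(Real.log (_root_.sigmoid (r x - r y)))))
            + ENNReal.ofReal (pc y * pu x * (-(Real.log (_root_.sigmoid (r y - r x)))))) ∂μ ∂μ := by
    intro r hrm
    set f : X → X → ℝ≥0∞ := fun x y =>
      ENNReal.ofReal (pc x * pu y * (-(Real.log (_root_.sigmoid (r x - r y))))) with hf
    have hfm : Measurable (Function.uncurry f) := by
      apply ENNReal.measurable_ofReal.comp
      exact ((hpcm.comp measurable_fst).mul (hpum.comp measurable_snd)).mul
        ((Real.measurable_log.comp (sigmoid_continuous.measurable.comp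
          ((hrm.comp measurable_fst).sub (hrm.comp measurable_snd)))).neg)
    have hfm2 : Measurable (fun z : X × X => f z.2 z.1) := by
      apply ENNReal.measurable_ofReal.comp
      exact ((hpcm.comp measurable_snd).mul (hpum.comp measurable_fst)).mul
        ((Real.measurable_log.comp (sigmoid_continuous.measurable.comp
          ((hrm.comp measurable_snd).sub (hrm.comp measurable_fst)))).neg)
    have hswap : (∫⁻ x, ∫⁻ y, f x y ∂μ ∂μ) = ∫⁻ x, ∫⁻ y, f y x ∂μ ∂μ := by
      rw [lintegral_lintegral_swap hfm.aemeasurable]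
    calc (∫⁻ x, ∫⁻ y, f x y ∂μ ∂μ) + (∫⁻ x, ∫⁻ y, f x y ∂μ ∂μ)
        = (∫⁻ x, ∫⁻ y, f x y ∂μ ∂μ) + (∫⁻ x, ∫⁻ y, f y x ∂μ ∂μ) := by rw [← hswap]
      _ = ∫⁻ x, ((∫⁻ y, f x y ∂μ) + (∫⁻ y, f y x ∂μ)) ∂μ := by
          rw [lintegral_add_left]
          exact hfm.lintegral_prod_right'
      _ = ∫⁻ x, ∫⁻ y, (f x y + f y x) ∂μ ∂μ := by
          refine lintegral_congr fun x => ?_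
          rw [lintegral_add_left]
          exact hfm.comp measurable_prodMk_left
  -- pointwise comparison
  have hpt : ∀ x y,
      ENNReal.ofReal (pc x * pu y * (-(Real.log (_root_.sigmoid (rs x - rs y)))))
        + ENNReal.ofReal (pc y * pu x * (-(Real.log (_root_.sigmoid (rs y - rs x)))))
      ≤ ENNReal.ofReal (pc x * pu y * (-(Real.log (_root_.sigmoid (rq x - rq y)))))
        + ENNReal.ofReal (pc y * pu x * (-(Real.log (_root_.sigmoid (rq y - rq x)))))
      := by
    intro x y
    have ha : 0 < pc x * pu y := mul_pos (hpcpos x) (hpupos y)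
    have hb : 0 < pc y * pu x := mul_pos (hpcpos y) (hpupos x)
    have e1 : rs x - rs y = Real.log ((pc x * pu y) / (pc y * pu x)) := hr x y
    have e2 : rs y - rs x = -(Real.log ((pc x * pu y) / (pc y * pu x))) := by
      rw [← e1]; ring
    have e3 : rq y - rq x = -(rq x - rq y) := by ring
    rw [e1, e2, e3,
      ← ENNReal.ofReal_add (mul_nonneg ha.le (neg_log_sigmoid_nonneg _))
        (mul_nonneg hb.le (neg_log_sigmoid_nonneg _)),
      ← ENNReal.ofReal_add (mul_nonneg ha.le (neg_log_sigmoid_nonneg _))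
        (mul_nonneg hb.le (neg_log_sigmoid_nonneg _))]
    exact ENNReal.ofReal_le_ofReal (key_pointwise ha hb _)
  -- conclusion
  have hsum :
      (∫⁻ x, ∫⁻ y, ENNReal.ofReal (pc x * pu y * (-(Real.log (_root_.sigmoid (rs x - rs y))))) ∂μ ∂μ)
        + (∫⁻ x, ∫⁻ y, ENNReal.ofReal (pc x * pu y * (-(Real.log (_root_.sigmoid (rs x - rs y))))) ∂μ ∂μ)
      ≤ (∫⁻ x, ∫⁻ y, ENNReal.ofReal (pc x * pu y * (-(Real.log (_root_.sigmoid (rq x - rq y))))) ∂μ ∂μ)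
        + (∫⁻ x, ∫⁻ y, ENNReal.ofReal (pc x * pu y * (-(Real.log (_root_.sigmoid (rq x - rq y))))) ∂μ ∂μ) := by
    rw [hdouble rs hrsm, hdouble rq hrqm]
    exact lintegral_mono fun x => lintegral_mono fun y => hpt x y
  have hfinal :
      (∫⁻ x, ∫⁻ y, ENNReal.ofReal (pc x * pu y * (-(Real.log (_root_.sigmoid (rs x - rs y))))) ∂μ ∂μ)
      ≤ (∫⁻ x, ∫⁻ y, ENNReal.ofReal (pc x * pu y * (-(Real.log (_root_.sigmoid (rq x - rq y))))) ∂μ ∂μ) := by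
    have h2 := hsum
    rw [← two_mul, ← two_mul] at h2
    exact (ENNReal.mul_le_mul_iff_right (by norm_num) (by norm_num)).1 h2
  exact hfinal
end

section
/- Let μ be a σ-finite measure on a measurable space X, let p_c and p_u be strictly positive probability densities with respect to μ, let λ > 0, and let σ(w) = 1/(1+e^{−w}) denote the sigmoid function. Define r*(x) = log(p_c(x)/p_u(x)) + log(1/λ). Then for every measurable function r : X → ℝ, ∫ log σ(r(x)) p_c(x) dμ(x) + λ ∫ log σ(−r(x)) p_u(x) dμ(x) ≤ ∫ log σ(r*(x)) p_c(x) dμ(x) + λ ∫ log σ(−r*(x)) p_u(x) dμ(x), where all integrals take values in [−∞, 0]; moreover any measurable maximizer equals r* μ-almost everywhere. -/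
open MeasureTheory Real ENNReal

lemma neg_log_sigmoid (w : ℝ) : -Real.log (_root_.sigmoid w) = Real.log (1 + Real.exp (-w)) := by
  have h : (0:ℝ) < 1 + Real.exp (-w) := by positivity
  unfold _root_.sigmoid
  rw [Real.log_div one_ne_zero (ne_of_gt h), Real.log_one]
  ring

lemma one_sub_inv_le_log {y : ℝ} (hy : 0 < y) : 1 - 1/y ≤ Real.log y := by
  have := Real.log_le_sub_one_of_pos (x := 1/y) (by positivity)
  rw [Real.log_div one_ne_zero (ne_of_gt hy), Real.log_one] at this
  linarith

lemma one_sub_inv_lt_log {y : ℝ} (hy : 0 < y) (hy1 : y ≠ 1) : 1 - 1/y < Real.log y := by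
  have h1 : (1:ℝ)/y ≠ 1 := by
    intro h; apply hy1; field_simp at h; exact h.symm
  have := Real.log_lt_sub_one_of_pos (x := 1/y) (by positivity) h1
  rw [Real.log_div one_ne_zero (ne_of_gt hy), Real.log_one] at this
  linarith

lemma key (a b w : ℝ) (ha : 0 < a) (hb : 0 < b) :
    a * Real.log (1 + Real.exp (-(Real.log (a/b)))) + b * Real.log (1 + Real.exp (Real.log (a/b)))
      ≤ a * Real.log (1 + Real.exp (-w)) + b * Real.log (1 + Real.exp w)
    ∧ (w ≠ Real.log (a/b) →
      a * Real.log (1 + Real.exp (-(Real.log (a/b)))) + b * Real.log (1 + Real.exp (Real.log (a/b)))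
      < a * Real.log (1 + Real.exp (-w)) + b * Real.log (1 + Real.exp w)) := by
  have hab : (0:ℝ) < a/b := by positivity
  have he1 : Real.exp (Real.log (a/b)) = a/b := Real.exp_log hab
  have he2 : Real.exp (-(Real.log (a/b))) = b/a := by
    rw [Real.exp_neg, he1]; field_simp
  set E := Real.exp (-w) with hE
  set E' := Real.exp w with hE'
  have hEpos : 0 < E := Real.exp_pos _
  have hE'pos : 0 < E' := Real.exp_pos _
  have hEE' : E * E' = 1 := by rw [hE, hE', ← Real.exp_add]; simp
  have hy1pos : 0 < a * (1 + E) / (a + b) := by positivity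
  have hy2pos : 0 < b * (1 + E') / (a + b) := by positivity
  have hid : a * Real.log (1 + E) + b * Real.log (1 + E')
      - (a * Real.log (1 + b/a) + b * Real.log (1 + a/b))
      = a * Real.log (a * (1 + E) / (a + b)) + b * Real.log (b * (1 + E') / (a + b)) := by
    have h1 : Real.log (a * (1 + E) / (a + b)) = Real.log a + Real.log (1 + E) - Real.log (a + b) := by
      rw [Real.log_div (by positivity) (by positivity), Real.log_mul (ne_of_gt ha) (by positivity)]
    have h2 : Real.log (b * (1 + E') / (a + b)) = Real.log b + Real.log (1 + E') - Real.log (a + b) := by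
      rw [Real.log_div (by positivity) (by positivity), Real.log_mul (ne_of_gt hb) (by positivity)]
    have h3 : Real.log (1 + b/a) = Real.log (a + b) - Real.log a := by
      rw [show 1 + b/a = (a+b)/a by field_simp; try ring_nf, Real.log_div (by positivity) (ne_of_gt ha)]
    have h4 : Real.log (1 + a/b) = Real.log (a + b) - Real.log b := by
      rw [show 1 + a/b = (a+b)/b by field_simp; try ring_nf, Real.log_div (by positivity) (ne_of_gt hb)]
    rw [h1, h2, h3, h4]; ring
  have hzero : a * (1 - 1/(a * (1 + E) / (a + b))) + b * (1 - 1/(b * (1 + E') / (a + b))) = 0 := by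
    field_simp
    linear_combination (a + b) * hEE'
  have hlb2 : 1 - 1/(b * (1 + E') / (a + b)) ≤ Real.log (b * (1 + E') / (a + b)) :=
    one_sub_inv_le_log hy2pos
  have hlb1 : 1 - 1/(a * (1 + E) / (a + b)) ≤ Real.log (a * (1 + E) / (a + b)) :=
    one_sub_inv_le_log hy1pos
  constructor
  · rw [he1, he2]
    nlinarith [hlb1, hlb2, hzero, hid]
  · intro hw
    rw [he1, he2]
    have hy1ne : a * (1 + E) / (a + b) ≠ 1 := by
      intro h
      apply hw
      rw [div_eq_one_iff_eq (by positivity)] at h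
      have hEba : E = b/a := by field_simp; linear_combination h
      have : -w = Real.log (b/a) := by rw [← hEba, hE, Real.log_exp]
      have hba : Real.log (b/a) = - Real.log (a/b) := by
        rw [show b/a = (a/b)⁻¹ by field_simp, Real.log_inv]
      linarith
    have hlb1' : 1 - 1/(a * (1 + E) / (a + b)) < Real.log (a * (1 + E) / (a + b)) :=
      one_sub_inv_lt_log hy1pos hy1ne
    nlinarith [hlb1', hlb2, hzero, hid]

open MeasureTheory ENNReal

lemma sigmoid_nls_nonneg (w : ℝ) : 0 ≤ -Real.log (_root_.sigmoid w) := by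
  rw [neg_log_sigmoid]
  apply Real.log_nonneg
  have := Real.exp_pos (-w); linarith

lemma meas_nls : Measurable (fun w : ℝ => -Real.log (_root_.sigmoid w)) := by
  have : (fun w : ℝ => -Real.log (_root_.sigmoid w)) = fun w => Real.log (1 + Real.exp (-w)) :=
    funext neg_log_sigmoid
  rw [this]
  exact Real.measurable_log.comp ((continuous_const.add (Real.continuous_exp.comp continuous_neg)).measurable)

/-- **Optimal reward of the λ-weighted NCE objective (CCA analysis).**  With strictly
positive densities `p_c, p_u` and `λ > 0`, the objective
`∫ log σ(r) p_c dμ + λ ∫ log σ(−r) p_u dμ` (valued in `[-∞, 0]`) is maximized over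
measurable rewards `r` by `r*(x) = log (p_c x / p_u x) + log (1/λ)`, and any measurable
maximizer equals `r*` μ-a.e.  Since the integrands are nonpositive, the objective is
stated via Lebesgue integrals of their negations (valued in `[0, ∞]`), reversed. -/
theorem cca_optimal_reward {X : Type*} [MeasurableSpace X]
    (μ : Measure X) [SigmaFinite μ]
    (pc pu : X → ℝ) (hpcm : Measurable pc) (hpum : Measurable pu)
    (hpcpos : ∀ x, 0 < pc x) (hpupos : ∀ x, 0 < pu x)
    (hpci : Integrable pc μ) (hpui : Integrable pu μ)
    (hpc1 : ∫ x, pc x ∂μ = 1) (hpu1 : ∫ x, pu x ∂μ = 1)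
    (lam : ℝ) (hlam : 0 < lam)
    (rstar : X → ℝ)
    (hrstar : ∀ x, rstar x = Real.log (pc x / pu x) + Real.log (1 / lam))
    (r : X → ℝ) (hrm : Measurable r) :
    ((∫⁻ x, ENNReal.ofReal (pc x * (-(Real.log (_root_.sigmoid (rstar x))))) ∂μ
        + ENNReal.ofReal lam *
          ∫⁻ x, ENNReal.ofReal (pu x * (-(Real.log (_root_.sigmoid (-rstar x))))) ∂μ)
      ≤ (∫⁻ x, ENNReal.ofReal (pc x * (-(Real.log (_root_.sigmoid (r x))))) ∂μ
        + ENNReal.ofReal lam *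
          ∫⁻ x, ENNReal.ofReal (pu x * (-(Real.log (_root_.sigmoid (-r x))))) ∂μ)) ∧
      (((∫⁻ x, ENNReal.ofReal (pc x * (-(Real.log (_root_.sigmoid (r x))))) ∂μ
        + ENNReal.ofReal lam *
          ∫⁻ x, ENNReal.ofReal (pu x * (-(Real.log (_root_.sigmoid (-r x))))) ∂μ)
      = (∫⁻ x, ENNReal.ofReal (pc x * (-(Real.log (_root_.sigmoid (rstar x))))) ∂μ
        + ENNReal.ofReal lam *
          ∫⁻ x, ENNReal.ofReal (pu x * (-(Real.log (_root_.sigmoid (-rstar x))))) ∂μ)) →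
        r =ᵐ[μ] rstar) := by
  -- rstar x = log (pc x / (lam * pu x))
  have hrs : ∀ x, rstar x = Real.log (pc x / (lam * pu x)) := by
    intro x
    rw [hrstar x, Real.log_div (ne_of_gt (hpcpos x)) (ne_of_gt (hpupos x)),
      Real.log_div (ne_of_gt (hpcpos x)) (ne_of_gt (mul_pos hlam (hpupos x))),
      Real.log_mul (ne_of_gt hlam) (ne_of_gt (hpupos x)), one_div, Real.log_inv]
    ring
  have hrstarm : Measurable rstar := by
    have : rstar = fun x => Real.log (pc x / pu x) + Real.log (1 / lam) := funext hrstar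
    rw [this]
    exact (Real.measurable_log.comp (hpcm.div hpum)).add measurable_const
  -- pointwise inequality and strictness
  have hmain : ∀ (x : X) (w : ℝ),
      (pc x * (-(Real.log (_root_.sigmoid (rstar x)))) + lam * (pu x * (-(Real.log (_root_.sigmoid (-rstar x))))))
        ≤ pc x * (-(Real.log (_root_.sigmoid w))) + lam * (pu x * (-(Real.log (_root_.sigmoid (-w)))))
      ∧ (w ≠ rstar x →
      (pc x * (-(Real.log (_root_.sigmoid (rstar x)))) + lam * (pu x * (-(Real.log (_root_.sigmoid (-rstar x))))))
        < pc x * (-(Real.log (_root_.sigmoid w))) + lam * (pu x * (-(Real.log (_root_.sigmoid (-w))))))  := by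
    intro x w
    have hbpos : 0 < lam * pu x := mul_pos hlam (hpupos x)
    have h := key (pc x) (lam * pu x) w (hpcpos x) hbpos
    rw [← hrs x] at h
    simp only [neg_log_sigmoid, neg_neg] at *
    constructor
    · have := h.1; nlinarith [this]
    · intro hw
      have := h.2 hw; nlinarith [this]
  -- combine the objective into a single lintegral
  have hOBJ : ∀ s : X → ℝ, Measurable s →
      (∫⁻ x, ENNReal.ofReal (pc x * (-(Real.log (_root_.sigmoid (s x))))) ∂μ
        + ENNReal.ofReal lam *
          ∫⁻ x, ENNReal.ofReal (pu x * (-(Real.log (_root_.sigmoid (-s x))))) ∂μ)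
      = ∫⁻ x, ENNReal.ofReal (pc x * (-(Real.log (_root_.sigmoid (s x))))
            + lam * (pu x * (-(Real.log (_root_.sigmoid (-s x)))))) ∂μ := by
    intro s hs
    have hm2 : Measurable fun x => ENNReal.ofReal (pu x * (-(Real.log (_root_.sigmoid (-s x))))) :=
      (hpum.mul (meas_nls.comp hs.neg)).ennreal_ofReal
    have hm1 : Measurable fun x => ENNReal.ofReal (pc x * (-(Real.log (_root_.sigmoid (s x))))) :=
      (hpcm.mul (meas_nls.comp hs)).ennreal_ofReal
    rw [← lintegral_const_mul _ hm2, ← lintegral_add_left hm1]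
    refine lintegral_congr fun x => ?_
    rw [← ENNReal.ofReal_mul hlam.le,
      ← ENNReal.ofReal_add (mul_nonneg (hpcpos x).le (sigmoid_nls_nonneg _))
        (mul_nonneg hlam.le (mul_nonneg (hpupos x).le (sigmoid_nls_nonneg _)))]
  have hGrm : Measurable fun x => ENNReal.ofReal (pc x * (-(Real.log (_root_.sigmoid (r x))))
        + lam * (pu x * (-(Real.log (_root_.sigmoid (-r x)))))) :=
    ((hpcm.mul (meas_nls.comp hrm)).add
      ((hpum.mul (meas_nls.comp hrm.neg)).const_mul lam)).ennreal_ofReal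
  have hGsm : Measurable fun x => ENNReal.ofReal (pc x * (-(Real.log (_root_.sigmoid (rstar x))))
        + lam * (pu x * (-(Real.log (_root_.sigmoid (-rstar x)))))) :=
    ((hpcm.mul (meas_nls.comp hrstarm)).add
      ((hpum.mul (meas_nls.comp hrstarm.neg)).const_mul lam)).ennreal_ofReal
  -- finiteness of the optimal objective
  have hbound : ∀ x, pc x * (-(Real.log (_root_.sigmoid (rstar x))))
      + lam * (pu x * (-(Real.log (_root_.sigmoid (-rstar x))))) ≤ pc x + lam * pu x := by
    intro x
    have ha := hpcpos x
    have hbpos : 0 < lam * pu x := mul_pos hlam (hpupos x)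
    simp only [neg_log_sigmoid, neg_neg]
    rw [hrs x]
    have he1 : Real.exp (Real.log (pc x / (lam * pu x))) = pc x / (lam * pu x) :=
      Real.exp_log (by positivity)
    have he2 : Real.exp (-(Real.log (pc x / (lam * pu x)))) = (lam * pu x) / pc x := by
      rw [Real.exp_neg, he1]; field_simp
    rw [he1, he2]
    have h1 : Real.log (1 + lam * pu x / pc x) ≤ lam * pu x / pc x := by
      have := Real.log_le_sub_one_of_pos (x := 1 + lam * pu x / pc x) (by positivity)
      linarith
    have h2 : Real.log (1 + pc x / (lam * pu x)) ≤ pc x / (lam * pu x) := by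
      have := Real.log_le_sub_one_of_pos (x := 1 + pc x / (lam * pu x)) (by positivity)
      linarith
    have h1' : pc x * Real.log (1 + lam * pu x / pc x) ≤ lam * pu x := by
      have := mul_le_mul_of_nonneg_left h1 ha.le
      have heq : pc x * (lam * pu x / pc x) = lam * pu x := by field_simp
      linarith [heq ▸ this]
    have h2' : (lam * pu x) * Real.log (1 + pc x / (lam * pu x)) ≤ pc x := by
      have := mul_le_mul_of_nonneg_left h2 hbpos.le
      have heq : (lam * pu x) * (pc x / (lam * pu x)) = pc x := by field_simp [(hpupos x).ne']
      linarith [heq ▸ this]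
    nlinarith [h1', h2']
  have hfin : (∫⁻ x, ENNReal.ofReal (pc x * (-(Real.log (_root_.sigmoid (rstar x))))
        + lam * (pu x * (-(Real.log (_root_.sigmoid (-rstar x)))))) ∂μ) < ⊤ := by
    calc _ ≤ ∫⁻ x, ENNReal.ofReal (pc x + lam * pu x) ∂μ :=
          lintegral_mono fun x => ENNReal.ofReal_le_ofReal (hbound x)
      _ < ⊤ := (hpci.add (hpui.const_mul lam)).lintegral_lt_top
  constructor
  · rw [hOBJ rstar hrstarm, hOBJ r hrm]
    exact lintegral_mono fun x => ENNReal.ofReal_le_ofReal (hmain x (r x)).1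
  · intro heq
    rw [hOBJ rstar hrstarm, hOBJ r hrm] at heq
    have hle : (fun x => ENNReal.ofReal (pc x * (-(Real.log (_root_.sigmoid (rstar x))))
          + lam * (pu x * (-(Real.log (_root_.sigmoid (-rstar x))))))) ≤ᵐ[μ]
        fun x => ENNReal.ofReal (pc x * (-(Real.log (_root_.sigmoid (r x))))
          + lam * (pu x * (-(Real.log (_root_.sigmoid (-r x))))))  :=
      Filter.Eventually.of_forall fun x => ENNReal.ofReal_le_ofReal (hmain x (r x)).1
    have hdiff := lintegral_sub hGsm hfin.ne hle
    have h0 : (∫⁻ x, (ENNReal.ofReal (pc x * (-(Real.log (_root_.sigmoid (r x))))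
          + lam * (pu x * (-(Real.log (_root_.sigmoid (-r x))))))
        - ENNReal.ofReal (pc x * (-(Real.log (_root_.sigmoid (rstar x))))
          + lam * (pu x * (-(Real.log (_root_.sigmoid (-rstar x)))))) ) ∂μ) = 0 := by
      rw [hdiff, heq, tsub_self]
    have hae := (lintegral_eq_zero_iff (hGrm.sub hGsm)).mp h0
    filter_upwards [hae] with x hx
    have hx' : ENNReal.ofReal (pc x * (-(Real.log (_root_.sigmoid (r x))))
          + lam * (pu x * (-(Real.log (_root_.sigmoid (-r x))))))
        ≤ ENNReal.ofReal (pc x * (-(Real.log (_root_.sigmoid (rstar x))))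
          + lam * (pu x * (-(Real.log (_root_.sigmoid (-rstar x)))))) := by
      have : ENNReal.ofReal _ - ENNReal.ofReal _ = 0 := hx
      exact tsub_eq_zero_iff_le.mp hx
    have heqx : pc x * (-(Real.log (_root_.sigmoid (r x))))
          + lam * (pu x * (-(Real.log (_root_.sigmoid (-r x)))))
        = pc x * (-(Real.log (_root_.sigmoid (rstar x))))
          + lam * (pu x * (-(Real.log (_root_.sigmoid (-rstar x)))))  := by
      have h2 := ENNReal.ofReal_le_ofReal (hmain x (r x)).1
      have := le_antisymm hx' h2
      exact (ENNReal.ofReal_eq_ofReal_iff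
        (add_nonneg (mul_nonneg (hpcpos x).le (sigmoid_nls_nonneg _))
          (mul_nonneg hlam.le (mul_nonneg (hpupos x).le (sigmoid_nls_nonneg _))))
        (add_nonneg (mul_nonneg (hpcpos x).le (sigmoid_nls_nonneg _))
          (mul_nonneg hlam.le (mul_nonneg (hpupos x).le (sigmoid_nls_nonneg _))))).mp this
    by_contra hne
    exact absurd heqx (ne_of_gt ((hmain x (r x)).2 hne))
end
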